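/- Assume the odd case and d ≤ m+n. Let f ∈ End_{Mat(OB_d(m−n))}(⊕_{s∈ÔSeq[d]} s), written f = Σ γ_{s,b,t} 1_s b 1_t, and assume Θ(f) commutes with the action of osp(V). If γ_{s_r,b_r,t_r} ≠ 0 for some b_r ∈ B̂[d]_{(k,r)} with r > 0, then there exists a sequence ((s_i,b_i,t_i))_{0 ≤ i ≤ r} of oriented generalized Brauer diagrams with b_i ∈ B̂[d]_{(k_i,i)} for some k_i ≥ k, γ_{s_i,b_i,t_i} ≠ 0 for all i, and b_r ◁ b_{r−1} ◁ … ◁ b_1 ◁ b_0; in particular b_0 ∈ B̂[d]_{(k_0,0)} has no singleton blocks. -/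

import Mathlib

open scoped BigOperators

namespace SWOSP
noncomputable section

/-- `(-1)^b` as a complex number. -/
def sgn (b : Bool) : ℂ := if b then -1 else 1

/-! ## The index set of the standard basis of `V` -/

/-- The index set `I`.  `none` is the extra index `0` (only present in the odd
case); `some (Sum.inl k)` is the unbarred index `k+1` and `some (Sum.inr k)` is
the barred index `(k+1)̄`. -/
abbrev Idx (m n : ℕ) (odd : Bool) : Type :=
  {x : Option (Fin (m + n) ⊕ Fin (m + n)) // x = none → odd = true}

/-- The parity of the basis vector `v_i`: even iff `‖i‖ ≤ m`. -/
def parI {m n : ℕ} {odd : Bool} (i : Idx m n odd) : Bool :=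
  match i.1 with
  | none => false
  | some (Sum.inl k) => decide (m ≤ (k : ℕ))
  | some (Sum.inr k) => decide (m ≤ (k : ℕ))

/-- The absolute value `‖i‖` of an index. -/
def absI {m n : ℕ} {odd : Bool} (i : Idx m n odd) : ℕ :=
  match i.1 with
  | none => 0
  | some (Sum.inl k) => (k : ℕ) + 1
  | some (Sum.inr k) => (k : ℕ) + 1

/-- The supersymmetric bilinear form on basis vectors. -/
def formB {m n : ℕ} {odd : Bool} (i j : Idx m n odd) : ℂ :=
  match i.1, j.1 with
  | none, none => 1
  | some (Sum.inl k), some (Sum.inr l) => if k = l then 1 else 0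
  | some (Sum.inr k), some (Sum.inl l) =>
      if k = l then (if (k : ℕ) < m then 1 else -1) else 0
  | _, _ => 0

/-- The bar involution on indices. -/
def barI {m n : ℕ} {odd : Bool} (i : Idx m n odd) : Idx m n odd :=
  match i with
  | ⟨none, h⟩ => ⟨none, h⟩
  | ⟨some (Sum.inl k), _⟩ => ⟨some (Sum.inr k), by simp⟩
  | ⟨some (Sum.inr k), _⟩ => ⟨some (Sum.inl k), by simp⟩

/-- The sign relating `v_i^*` to `v_{bar i}`:  `v_i^* = epsI i • v_{bar i}`. -/
def epsI {m n : ℕ} {odd : Bool} (i : Idx m n odd) : ℂ :=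
  match i.1 with
  | some (Sum.inr k) => if (k : ℕ) < m then 1 else -1
  | _ => 1

/-- Matrix expressing the right dual basis: `v_c^* = ∑ k, Cdual k c • v_k`. -/
def Cdual (m n : ℕ) (odd : Bool) : Matrix (Idx m n odd) (Idx m n odd) ℂ :=
  Matrix.of fun k c => if k = barI c then epsI c else 0

/-- The form as a matrix. -/
def formBM (m n : ℕ) (odd : Bool) : Matrix (Idx m n odd) (Idx m n odd) ℂ :=
  Matrix.of fun i j => formB i j

/-! ## Operators on tensor powers, over an arbitrary homogeneous basis -/

section general

variable {ι : Type} [Fintype ι] [DecidableEq ι]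

/-- The tensor power `V^{⊗ d}`, realised as functions on `d`-tuples of basis
indices (the coordinates with respect to the standard basis of tensors). -/
abbrev TensG (ι : Type) (d : ℕ) : Type := (Fin d → ι) → ℂ

/-- The matrix (in the standard basis of `V^{⊗d}`) of the super-flip
`s_{i+1} = id^{⊗ i} ⊗ σ ⊗ id^{⊗(d-i-2)}`, `σ (v ⊗ w) = (-1)^{|v||w|} w ⊗ v`,
acting on the `(i+1)`-st and `(i+2)`-nd tensor factors (0-based positions `i`, `i+1`).
`p` is the parity function of the basis. -/
def sMatG (d : ℕ) (p : ι → Bool) (i : ℕ) (h : i + 1 < d) :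
    Matrix (Fin d → ι) (Fin d → ι) ℂ :=
  Matrix.of fun out inp =>
    if (∀ j : Fin d, (j : ℕ) ≠ i → (j : ℕ) ≠ i + 1 → out j = inp j)
        ∧ out ⟨i, Nat.lt_of_succ_lt h⟩ = inp ⟨i + 1, h⟩
        ∧ out ⟨i + 1, h⟩ = inp ⟨i, Nat.lt_of_succ_lt h⟩
    then sgn (p (inp ⟨i, Nat.lt_of_succ_lt h⟩) && p (inp ⟨i + 1, h⟩))
    else 0

/-- The matrix of `e_{i+1} = id^{⊗ i} ⊗ τ ⊗ id^{⊗(d-i-2)}` where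
`τ(v ⊗ w) = ⟨v,w⟩ ∑_c (-1)^{|v_c|} v_c ⊗ v_c^*`; here `B` is the matrix of the
bilinear form on the basis and `C` the matrix of the right dual basis,
`v_c^* = ∑ k, C k c • v_k`. -/
def eMatG (d : ℕ) (p : ι → Bool) (B C : Matrix ι ι ℂ) (i : ℕ) (h : i + 1 < d) :
    Matrix (Fin d → ι) (Fin d → ι) ℂ :=
  Matrix.of fun out inp =>
    if ∀ j : Fin d, (j : ℕ) ≠ i → (j : ℕ) ≠ i + 1 → out j = inp j
    then B (inp ⟨i, Nat.lt_of_succ_lt h⟩) (inp ⟨i + 1, h⟩)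
          * sgn (p (out ⟨i, Nat.lt_of_succ_lt h⟩))
          * C (out ⟨i + 1, h⟩) (out ⟨i, Nat.lt_of_succ_lt h⟩)
    else 0

/-- The matrix of the action of a homogeneous element `X` (a matrix in the basis
of `V`, with parity `px`) on `V^{⊗ d}` via the super Leibniz rule
`X.(w₁ ⊗ ⋯ ⊗ w_d) = ∑ i (-1)^{(|w₁|+⋯+|w_{i-1}|)|X|} w₁ ⊗ ⋯ ⊗ X w_i ⊗ ⋯ ⊗ w_d`. -/
def rhoMatG (d : ℕ) (p : ι → Bool) (X : Matrix ι ι ℂ) (px : Bool) :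
    Matrix (Fin d → ι) (Fin d → ι) ℂ :=
  Matrix.of fun out inp => ∑ pos : Fin d,
    if ∀ j, j ≠ pos → out j = inp j then
      (if px then ∏ j ∈ Finset.univ.filter (fun j : Fin d => j < pos),
          sgn (p (inp j)) else 1)
        * X (out pos) (inp pos)
    else 0

/-- `X` is homogeneous of parity `px` with respect to the basis parity `p`
(membership in `gl(V)_{px}`). -/
def IsHomogG (p : ι → Bool) (X : Matrix ι ι ℂ) (px : Bool) : Prop :=
  ∀ i j, X i j ≠ 0 → xor (p i) (p j) = px

/-- `X` is a homogeneous element of `osp(V)` of parity `px`:  it is homogeneous and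
satisfies `⟨X v, w⟩ + (-1)^{|X||v|} ⟨v, X w⟩ = 0` on basis vectors. -/
def IsOspHomogG (p : ι → Bool) (B : Matrix ι ι ℂ) (X : Matrix ι ι ℂ) (px : Bool) : Prop :=
  IsHomogG p X px ∧
    ∀ j l, (∑ a, X a j * B a l) + sgn (px && p j) * (∑ a, X a l * B j a) = 0

end general

/-- `V^{⊗d}` for the concrete space `V` with `sdim V = 2m+1|2n` (odd) or `2m|2n` (even). -/
abbrev Tens (m n : ℕ) (odd : Bool) (d : ℕ) : Type := TensG (Idx m n odd) d

/-! ## The Brauer algebra, by generators and relations -/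

/-- Generators of the Brauer algebra `Br_d(δ)`: `S i` is the transposition
generator `s_{i+1}` and `E i` the Temperley–Lieb type generator `e_{i+1}`
(`0`-based, so `i` ranges over `i + 1 < d`, matching `1 ≤ i+1 ≤ d-1`). -/
inductive BrGen (d : ℕ) : Type where
  | S : {i : ℕ // i + 1 < d} → BrGen d
  | E : {i : ℕ // i + 1 < d} → BrGen d

/-- The generator `s` inside the free algebra. -/
def σg (d : ℕ) (i : {i : ℕ // i + 1 < d}) : FreeAlgebra ℂ (BrGen d) :=
  FreeAlgebra.ι ℂ (BrGen.S i)

/-- The generator `e` inside the free algebra. -/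
def εg (d : ℕ) (i : {i : ℕ // i + 1 < d}) : FreeAlgebra ℂ (BrGen d) :=
  FreeAlgebra.ι ℂ (BrGen.E i)

/-- The defining relations of the Brauer algebra `Br_d(δ)`. -/
inductive BrauerRel (d : ℕ) (δ : ℂ) :
    FreeAlgebra ℂ (BrGen d) → FreeAlgebra ℂ (BrGen d) → Prop where
  | s_sq (i) : BrauerRel d δ (σg d i * σg d i) 1
  | s_comm (i j) (h : i.1 + 1 < j.1) :
      BrauerRel d δ (σg d i * σg d j) (σg d j * σg d i)
  | braid (i j) (h : j.1 = i.1 + 1) :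
      BrauerRel d δ (σg d i * σg d j * σg d i) (σg d j * σg d i * σg d j)
  | e_sq (i) : BrauerRel d δ (εg d i * εg d i) (δ • εg d i)
  | e_comm (i j) (h : i.1 + 1 < j.1) :
      BrauerRel d δ (εg d i * εg d j) (εg d j * εg d i)
  | e_jones₁ (i j) (h : j.1 = i.1 + 1) :
      BrauerRel d δ (εg d i * εg d j * εg d i) (εg d i)
  | e_jones₂ (i j) (h : j.1 = i.1 + 1) :
      BrauerRel d δ (εg d j * εg d i * εg d j) (εg d j)
  | se (i) : BrauerRel d δ (σg d i * εg d i) (εg d i)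
  | es (i) : BrauerRel d δ (εg d i * σg d i) (εg d i)
  | ses₁ (i j) (h : j.1 = i.1 + 1) :
      BrauerRel d δ (σg d i * εg d j * εg d i) (σg d j * εg d i)
  | ses₂ (i j) (h : j.1 = i.1 + 1) :
      BrauerRel d δ (σg d j * εg d i * εg d j) (σg d i * εg d j)

/-- The Brauer algebra `Br_d(δ)`. -/
abbrev BrauerAlg (d : ℕ) (δ : ℂ) : Type := RingQuot (BrauerRel d δ)

/-- The generator `s_{i+1}` of the Brauer algebra. -/
noncomputable def brS (d : ℕ) (δ : ℂ) (i : {i : ℕ // i + 1 < d}) : BrauerAlg d δ :=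
  RingQuot.mkAlgHom ℂ (BrauerRel d δ) (σg d i)

/-- The generator `e_{i+1}` of the Brauer algebra. -/
noncomputable def brE (d : ℕ) (δ : ℂ) (i : {i : ℕ // i + 1 < d}) : BrauerAlg d δ :=
  RingQuot.mkAlgHom ℂ (BrauerRel d δ) (εg d i)

/-! ## (Generalized) Brauer diagrams as functions on vertices -/

/-- Vertices of a diagram with `dt` top and `ds` bottom vertices, and the
diagram itself as a function (an involution; fixed points are singleton blocks). -/
abbrev GDg (dt ds : ℕ) : Type := Fin dt ⊕ Fin ds → Fin dt ⊕ Fin ds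

/-- Diagrams with the same number `d` of top and bottom vertices. -/
abbrev DgFun (d : ℕ) : Type := GDg d d

/-- A genuine Brauer diagram: an involution without fixed points (all blocks
have exactly two elements). -/
def IsBrauerDiag (d : ℕ) (f : DgFun d) : Prop :=
  Function.Involutive f ∧ ∀ x, f x ≠ x

/-- The identity Brauer diagram, connecting `j` with `j*`. -/
def idDiag (d : ℕ) : DgFun d := Sum.swap

/-- The Brauer diagram `s_{i+1}` (0-based `i`). -/
def sFun (d i : ℕ) (h : i + 1 < d) : DgFun d :=
  fun x =>
    match x with
    | Sum.inl j => Sum.inr (Equiv.swap (⟨i, Nat.lt_of_succ_lt h⟩ : Fin d) ⟨i + 1, h⟩ j)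
    | Sum.inr j => Sum.inl (Equiv.swap (⟨i, Nat.lt_of_succ_lt h⟩ : Fin d) ⟨i + 1, h⟩ j)

/-- The Brauer diagram `e_{i+1}` (0-based `i`). -/
def eFun (d i : ℕ) (h : i + 1 < d) : DgFun d :=
  fun x =>
    match x with
    | Sum.inl j =>
        if (j : ℕ) = i then Sum.inl ⟨i + 1, h⟩
        else if (j : ℕ) = i + 1 then Sum.inl ⟨i, Nat.lt_of_succ_lt h⟩
        else Sum.inr j
    | Sum.inr j =>
        if (j : ℕ) = i then Sum.inr ⟨i + 1, h⟩
        else if (j : ℕ) = i + 1 then Sum.inr ⟨i, Nat.lt_of_succ_lt h⟩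
        else Sum.inl j

/-! ## Stacking diagrams: composition and circle count -/

section stacking

variable (d1 d2 d3 : ℕ)

/-- Vertices of the stacked picture: top row (`Fin d3`), middle row (`Fin d2`),
bottom row (`Fin d1`). -/
abbrev StackV : Type := Fin d3 ⊕ (Fin d2 ⊕ Fin d1)

/-- The vertices of the upper diagram (from `d2` to `d3`) inside the stack. -/
def vTM : Fin d3 ⊕ Fin d2 → StackV d1 d2 d3 := Sum.map id Sum.inl

/-- The vertices of the lower diagram (from `d1` to `d2`) inside the stack. -/
def vMB : Fin d2 ⊕ Fin d1 → StackV d1 d2 d3 := Sum.inr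

/-- The outer vertices (top and bottom row) inside the stack. -/
def vOut : Fin d3 ⊕ Fin d1 → StackV d1 d2 d3 := Sum.map id Sum.inr

/-- The relation on the stacked picture generated by the strands of the lower
diagram `b1` (from `d1` to `d2`) and the upper diagram `b2` (from `d2` to `d3`). -/
def stackRel (b1 : GDg d2 d1) (b2 : GDg d3 d2) :
    StackV d1 d2 d3 → StackV d1 d2 d3 → Prop := fun x y =>
  (∃ u, x = vTM d1 d2 d3 u ∧ y = vTM d1 d2 d3 (b2 u)) ∨
  (∃ u, x = vMB d1 d2 d3 u ∧ y = vMB d1 d2 d3 (b1 u))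

/-- Two stacked vertices are connected. -/
def StackEq (b1 : GDg d2 d1) (b2 : GDg d3 d2) :
    StackV d1 d2 d3 → StackV d1 d2 d3 → Prop :=
  Relation.EqvGen (stackRel d1 d2 d3 b1 b2)

/-- `b3` is the composite diagram `b2 ∘ b1` obtained by stacking `b2` on top of
`b1`, eliminating the middle row (and with it all internal `∘`'s and circles):
two distinct outer vertices are joined in `b3` iff they are connected through
the stack. -/
def IsCompositeG (b1 : GDg d2 d1) (b2 : GDg d3 d2) (b3 : GDg d3 d1) : Prop :=
  ∀ x y : Fin d3 ⊕ Fin d1, x ≠ y →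
    (b3 x = y ↔ StackEq d1 d2 d3 b1 b2 (vOut d1 d2 d3 x) (vOut d1 d2 d3 y))

/-- The number of internal circles removed when stacking `b2` on top of `b1`:
the number of connected components of the stack that lie entirely in the middle
row and have at least two vertices. -/
def circNum (b1 : GDg d2 d1) (b2 : GDg d3 d2) : ℕ :=
  Nat.card (Quotient (Setoid.comap
    (fun j : {j : Fin d2 //
        (∀ x : Fin d3 ⊕ Fin d1,
          ¬ StackEq d1 d2 d3 b1 b2 (Sum.inr (Sum.inl j)) (vOut d1 d2 d3 x)) ∧
        ∃ j' : Fin d2, j' ≠ j ∧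
          StackEq d1 d2 d3 b1 b2 (Sum.inr (Sum.inl j)) (Sum.inr (Sum.inl j'))} =>
      (Sum.inr (Sum.inl j.1) : StackV d1 d2 d3))
    (Relation.EqvGen.setoid (stackRel d1 d2 d3 b1 b2))))

end stacking

/-- `c` is a subdiagram of `b`: every block of `c` is a block of `b` or a
singleton obtained by removing an arc of `b`. -/
def subDiagOf {dt ds : ℕ} (c b : GDg dt ds) : Prop := ∀ x, c x = x ∨ c x = b x

/-- The number of vertical strands (blocks `{i, j*}`) of a diagram. -/
def vCount (d : ℕ) (c : DgFun d) : ℕ :=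
  (Finset.univ.filter fun i : Fin d => (c (Sum.inl i)).isRight = true).card

/-- The number of singleton blocks of a diagram. -/
def fixCount (d : ℕ) (c : DgFun d) : ℕ :=
  (Finset.univ.filter fun x : Fin d ⊕ Fin d => c x = x).card

/-! ## Orientations -/

/-- Orientation symbols: `∧`, `∨`, `∘`. -/
inductive Or3 : Type where
  | up : Or3
  | down : Or3
  | circ : Or3
  deriving DecidableEq

instance instFintypeOr3 : Fintype Or3 :=
  ⟨{Or3.up, Or3.down, Or3.circ}, fun x => by cases x <;> simp⟩

/-- `(t, b, s)` is an oriented generalized Brauer diagram with orientation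
sequence `t` on top and `s` at the bottom. -/
def OrientedGBD (dt ds : ℕ) (t : Fin dt → Or3) (s : Fin ds → Or3)
    (b : GDg dt ds) : Prop :=
  Function.Involutive b ∧
  (∀ i j : Fin dt, i ≠ j → b (Sum.inl i) = Sum.inl j →
      ((t i = Or3.up ∧ t j = Or3.down) ∨ (t i = Or3.down ∧ t j = Or3.up))) ∧
  (∀ i j : Fin ds, i ≠ j → b (Sum.inr i) = Sum.inr j →
      ((s i = Or3.up ∧ s j = Or3.down) ∨ (s i = Or3.down ∧ s j = Or3.up))) ∧
  (∀ (i : Fin dt) (j : Fin ds), b (Sum.inl i) = Sum.inr j →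
      t i = s j ∧ t i ≠ Or3.circ) ∧
  (∀ i : Fin dt, b (Sum.inl i) = Sum.inl i → t i = Or3.circ) ∧
  (∀ i : Fin ds, b (Sum.inr i) = Sum.inr i → s i = Or3.circ)

/-- Whether a basis index of `V` belongs to the summand labelled by an
orientation symbol (`∧ ↦ W_∧`, `∨ ↦ W_∨`, `∘ ↦ W_∘`). -/
def matchB {m n : ℕ} {odd : Bool} (x : Idx m n odd) (o : Or3) : Bool :=
  match o, x.1 with
  | Or3.up, some (Sum.inl _) => true
  | Or3.down, some (Sum.inr _) => true
  | Or3.circ, none => true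
  | _, _ => false

/-- The identity morphism of the object `s`: vertical strands at the non-`∘`
positions, singletons at the `∘` positions. -/
def idGDiag (d : ℕ) (s : Fin d → Or3) : DgFun d := fun x =>
  match x with
  | Sum.inl j => if s j = Or3.circ then Sum.inl j else Sum.inr j
  | Sum.inr j => if s j = Or3.circ then Sum.inr j else Sum.inl j

/-! ## The weight of a labelled oriented diagram and the functor `F` -/

/-- Position of a vertex when the diagram is drawn in the plane and the
boundary is traversed counterclockwise (bottom row left to right, then top row
right to left).  Two strands cross (mod 2) iff their endpoints interleave. -/
def posV (dt ds : ℕ) : Fin dt ⊕ Fin ds → ℕ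
  | Sum.inl k => ds + (dt - 1 - (k : ℕ))
  | Sum.inr k => (k : ℕ)

/-- The product of the signs `(-1)^{|i||j|}` over all crossings of two strands
labelled `i` and `j`. -/
def crossSgn {m n : ℕ} {odd : Bool} (dt ds : ℕ) (b : GDg dt ds)
    (L : Fin dt ⊕ Fin ds → Idx m n odd) : ℂ :=
  ∏ x : Fin dt ⊕ Fin ds, ∏ y : Fin dt ⊕ Fin ds,
    if posV dt ds x < posV dt ds (b x) ∧ posV dt ds y < posV dt ds (b y)
        ∧ posV dt ds x < posV dt ds y
        ∧ Xor (posV dt ds x < posV dt ds y ∧ posV dt ds y < posV dt ds (b x))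
            (posV dt ds x < posV dt ds (b y) ∧ posV dt ds (b y) < posV dt ds (b x))
    then sgn (parI (L x) && parI (L y)) else 1

/-- `(-1)` for every clockwise cap with large labels. -/
def capSgn {m n : ℕ} {odd : Bool} (dt ds : ℕ) (s : Fin ds → Or3) (b : GDg dt ds)
    (js : Fin ds → Idx m n odd) : ℂ :=
  ∏ i : Fin ds, ∏ j : Fin ds,
    if (i : ℕ) < (j : ℕ) ∧ b (Sum.inr i) = Sum.inr j ∧ s i = Or3.up ∧ m < absI (js i)
    then -1 else 1

/-- `(-1)` for every anticlockwise cup with large labels. -/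
def cupSgn {m n : ℕ} {odd : Bool} (dt ds : ℕ) (t : Fin dt → Or3) (b : GDg dt ds)
    (jt : Fin dt → Idx m n odd) : ℂ :=
  ∏ i : Fin dt, ∏ j : Fin dt,
    if (i : ℕ) < (j : ℕ) ∧ b (Sum.inl i) = Sum.inl j ∧ t i = Or3.down ∧ m < absI (jt i)
    then -1 else 1

/-- The weight `wt(b_ĩ^j̃)` of the diagram `b` with top labels `jt` and bottom
labels `js`: zero unless the labels match the orientations and are consistent
(constant absolute value on each block), and otherwise the product of the
crossing, cap and cup signs. -/
def wtD (m n : ℕ) (odd : Bool) (dt ds : ℕ) (t : Fin dt → Or3) (s : Fin ds → Or3)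
    (b : GDg dt ds) (jt : Fin dt → Idx m n odd) (js : Fin ds → Idx m n odd) : ℂ :=
  if (∀ k, matchB (js k) (s k) = true) ∧ (∀ k, matchB (jt k) (t k) = true) ∧
      (∀ x, absI (Sum.elim jt js (b x)) = absI (Sum.elim jt js x))
  then crossSgn dt ds b (Sum.elim jt js) * capSgn dt ds s b js * cupSgn dt ds t b jt
  else 0

/-- The matrix of `F(b) : W_s → W_t` in the standard bases. -/
def FMat (m n : ℕ) (odd : Bool) (dt ds : ℕ) (t : Fin dt → Or3) (s : Fin ds → Or3)
    (b : GDg dt ds) : Matrix (Fin dt → Idx m n odd) (Fin ds → Idx m n odd) ℂ :=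
  Matrix.of fun jt js => wtD m n odd dt ds t s b jt js

/-- The linear map `F(b)`. -/
def Flin (m n : ℕ) (odd : Bool) (dt ds : ℕ) (t : Fin dt → Or3) (s : Fin ds → Or3)
    (b : GDg dt ds) : Tens m n odd ds →ₗ[ℂ] Tens m n odd dt :=
  Matrix.toLin' (FMat m n odd dt ds t s b)

/-- The space of endomorphisms of `⊕_s s` in the additive closure of the
oriented Brauer category: matrices of formal linear combinations of diagrams;
`F s t c` is the coefficient of the diagram `c ∈ Hom(s,t)` in the component
`(t, s)` of the matrix. -/
abbrev EndSp (d : ℕ) : Type := (Fin d → Or3) → (Fin d → Or3) → DgFun d → ℂ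

/-- The matrix of `Θ(F)` acting on `V^{⊗ d} = ⊕_s W_s`. -/
def ThetaMat (m n : ℕ) (odd : Bool) (d : ℕ) (F : EndSp d) :
    Matrix (Fin d → Idx m n odd) (Fin d → Idx m n odd) ℂ :=
  Matrix.of fun out inp =>
    ∑ s : Fin d → Or3, ∑ t : Fin d → Or3, ∑ c : DgFun d,
      F s t c * wtD m n odd d d t s c out inp

open Classical in
/-- The element `M(b)` of `End(⊕_s s)` attached to a Brauer diagram `b`:
its `(t,s)`-entry is the unique subdiagram of `b` that is an oriented diagram
from `s` to `t` (and `0` if there is none).  In the even case (`odd = false`)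
only `∘`-free orientation sequences are allowed. -/
def MOf (d : ℕ) (odd : Bool) (b : DgFun d) : EndSp d := fun s t c =>
  if (odd = false → (∀ j, s j ≠ Or3.circ) ∧ (∀ j, t j ≠ Or3.circ)) ∧
      subDiagOf c b ∧ OrientedGBD d d t s c
  then 1 else 0

open Classical in
/-- Multiplication (composition) in `End(⊕_s s)`: `convE δc F G` is "`F` after
`G`", composing diagrams by stacking with a factor `δc` for each removed
internal circle. -/
def convE (d : ℕ) (δc : ℂ) (F G : EndSp d) : EndSp d := fun s u c =>
  ∑ t : Fin d → Or3, ∑ b1 : DgFun d, ∑ b2 : DgFun d,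
    F t u b2 * G s t b1 *
      (if OrientedGBD d d t s b1 ∧ OrientedGBD d d u t b2 ∧
          IsCompositeG d d d b1 b2 c
       then δc ^ circNum d d d b1 b2 else 0)

open Classical in
/-- The identity element of `End(⊕_s s)` (in the even case restricted to the
`∘`-free objects). -/
def idE (d : ℕ) (odd : Bool) : EndSp d := fun s t c =>
  if (odd = false → ∀ j, s j ≠ Or3.circ) ∧ s = t ∧
      c = (fun x => match x with
            | Sum.inl j => if s j = Or3.circ then Sum.inl j else Sum.inr j
            | Sum.inr j => if s j = Or3.circ then Sum.inr j else Sum.inl j)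
  then 1 else 0

/-! ## The embedding of `gl(m|n)` -/

/-- Parity of the index `k+1` for `gl(m|n)`. -/
def pF (m n : ℕ) (k : Fin (m + n)) : Bool := decide (m ≤ (k : ℕ))

/-- A matrix in `gl(m|n)` is homogeneous of parity `px`. -/
def IsHomogF (m n : ℕ) (g : Matrix (Fin (m + n)) (Fin (m + n)) ℂ) (px : Bool) : Prop :=
  ∀ i j, g i j ≠ 0 → xor (pF m n i) (pF m n j) = px

/-- The embedding `ι : gl(m|n) → osp(V)`: `g` acts by `g` on the span `W_∧` of
the unbarred vectors, by the dual of `g` on the span `W_∨` of the barred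
vectors, and by `0` on `v_0`. -/
def glEmb (m n : ℕ) (odd : Bool) (g : Matrix (Fin (m + n)) (Fin (m + n)) ℂ) :
    Matrix (Idx m n odd) (Idx m n odd) ℂ :=
  Matrix.of fun x y =>
    match x.1, y.1 with
    | some (Sum.inl a), some (Sum.inl b) => g a b
    | some (Sum.inr a), some (Sum.inr b) =>
        (if (a : ℕ) < m ∧ m ≤ (b : ℕ) then 1 else -1) * g b a
    | _, _ => 0

/-- The matrix of the dual of the natural representation of `gl(m|n)` in the
basis `(w_i)`: `E_{i,j} w_k = -δ_{i,k} (-1)^{(|i|+|j|)|i|} w_j`. -/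
def dualMat (m n : ℕ) (g : Matrix (Fin (m + n)) (Fin (m + n)) ℂ) :
    Matrix (Fin (m + n)) (Fin (m + n)) ℂ :=
  Matrix.of fun a b => -(sgn (xor (pF m n a) (pF m n b) && pF m n b)) * g b a

/-! ## Coordinate subspaces -/

/-- The subspace of coordinate vectors supported on `{x | P x}`. -/
def suppSub {κ : Type} (P : κ → Prop) : Submodule ℂ (κ → ℂ) where
  carrier := {f | ∀ x, ¬ P x → f x = 0}
  add_mem' := by
    intro a b ha hb x hx
    simp only [Pi.add_apply, ha x hx, hb x hx, add_zero]
  zero_mem' := fun x _ => rfl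
  smul_mem' := by
    intro c f hf x hx
    simp only [Pi.smul_apply, hf x hx, smul_zero]

/-- `W_∧`, the span of the unbarred basis vectors. -/
def Wup (m n : ℕ) (odd : Bool) : Submodule ℂ (Idx m n odd → ℂ) :=
  suppSub (fun x => ∃ k, x.1 = some (Sum.inl k))

/-- `W_∨`, the span of the barred basis vectors. -/
def Wdn (m n : ℕ) (odd : Bool) : Submodule ℂ (Idx m n odd → ℂ) :=
  suppSub (fun x => ∃ k, x.1 = some (Sum.inr k))

/-- `W_∘`, the span of `v_0` (zero in the even case). -/
def Wo (m n : ℕ) (odd : Bool) : Submodule ℂ (Idx m n odd → ℂ) :=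
  suppSub (fun x => x.1 = none)

/-- The summand `W_s = W_{s_1} ⊗ ⋯ ⊗ W_{s_d}` of `V^{⊗ d}`. -/
def Wseq (m n : ℕ) (odd : Bool) (d : ℕ) (s : Fin d → Or3) :
    Submodule ℂ (Tens m n odd d) :=
  suppSub (fun v => ∀ k, matchB (v k) (s k) = true)

/-- The matrix of the signed permutation action of `σ ∈ S_d` on `V^{⊗ d}`:
the tensor factor in position `j` is moved to position `σ j`, with the sign
`∏ (-1)^{|v_a||v_b|}` over the inversions of `σ`. -/
def permMat (m n : ℕ) (odd : Bool) (d : ℕ) (σ : Equiv.Perm (Fin d)) :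
    Matrix (Fin d → Idx m n odd) (Fin d → Idx m n odd) ℂ :=
  Matrix.of fun out inp =>
    if ∀ j, out (σ j) = inp j then
      ∏ a : Fin d, ∏ b : Fin d,
        if a < b ∧ σ b < σ a then sgn (parI (inp a) && parI (inp b)) else 1
    else 0


/-! ### Auxiliary machinery for Corollary 5.8 -/

section Aux58

variable {m n : ℕ}

/-- The basis index `0`. -/
def oI : Idx m n true := ⟨none, fun _ => rfl⟩

def vaI (m n : ℕ) (a : Fin (m + n)) : Idx m n true := ⟨some (Sum.inl a), fun _ => rfl⟩
def vbI (m n : ℕ) (a : Fin (m + n)) : Idx m n true := ⟨some (Sum.inr a), fun _ => rfl⟩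

lemma vaI_ne_oI (a : Fin (m+n)) : vaI m n a ≠ oI := by
  simp [vaI, oI, Subtype.ext_iff]
lemma vbI_ne_oI (a : Fin (m+n)) : vbI m n a ≠ oI := by
  simp [vbI, oI, Subtype.ext_iff]
lemma vaI_ne_vbI (a : Fin (m+n)) : vaI m n a ≠ vbI m n a := by
  simp [vaI, vbI, Subtype.ext_iff]

lemma absI_oI : absI (oI : Idx m n true) = 0 := rfl
lemma absI_vaI (a : Fin (m+n)) : absI (vaI m n a) = (a:ℕ)+1 := rfl
lemma absI_vbI (a : Fin (m+n)) : absI (vbI m n a) = (a:ℕ)+1 := rfl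

lemma absI_eq_zero {x : Idx m n true} (h : absI x = 0) : x = oI := by
  obtain ⟨v, hv⟩ := x
  apply Subtype.ext
  match v with
  | none => rfl
  | some (Sum.inl k) => exact absurd h (by simp [absI])
  | some (Sum.inr k) => exact absurd h (by simp [absI])

lemma matchB_circ {x : Idx m n true} (h : matchB x Or3.circ = true) : x = oI := by
  obtain ⟨v, hv⟩ := x
  apply Subtype.ext
  match v with
  | none => rfl
  | some (Sum.inl k) => exact absurd h (by simp [matchB])
  | some (Sum.inr k) => exact absurd h (by simp [matchB])

lemma matchB_oI {o : Or3} (h : matchB (oI : Idx m n true) o = true) : o = Or3.circ := by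
  match o with
  | Or3.circ => rfl
  | Or3.up => exact absurd h (by simp [matchB, oI])
  | Or3.down => exact absurd h (by simp [matchB, oI])

lemma matchB_unique {x : Idx m n true} {o o' : Or3} (h : matchB x o = true)
    (h' : matchB x o' = true) : o = o' := by
  obtain ⟨v, hv⟩ := x
  rcases v with _ | (k | k) <;> rcases o with _|_|_ <;> rcases o' with _|_|_ <;>
    simp_all [matchB]

lemma sgn_ne_zero (b : Bool) : sgn b ≠ 0 := by cases b <;> simp [sgn]

lemma crossSgn_ne_zero {dt ds : ℕ} (b : GDg dt ds) (L : Fin dt ⊕ Fin ds → Idx m n true) :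
    crossSgn dt ds b L ≠ 0 := by
  unfold crossSgn
  refine Finset.prod_ne_zero_iff.2 fun x _ => Finset.prod_ne_zero_iff.2 fun y _ => ?_
  split
  · exact sgn_ne_zero _
  · exact one_ne_zero

lemma capSgn_ne_zero {dt ds : ℕ} (s : Fin ds → Or3) (b : GDg dt ds)
    (js : Fin ds → Idx m n true) : capSgn dt ds s b js ≠ 0 := by
  unfold capSgn
  refine Finset.prod_ne_zero_iff.2 fun x _ => Finset.prod_ne_zero_iff.2 fun y _ => ?_
  split
  · exact neg_ne_zero.2 one_ne_zero
  · exact one_ne_zero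

lemma cupSgn_ne_zero {dt ds : ℕ} (t : Fin dt → Or3) (b : GDg dt ds)
    (jt : Fin dt → Idx m n true) : cupSgn dt ds t b jt ≠ 0 := by
  unfold cupSgn
  refine Finset.prod_ne_zero_iff.2 fun x _ => Finset.prod_ne_zero_iff.2 fun y _ => ?_
  split
  · exact neg_ne_zero.2 one_ne_zero
  · exact one_ne_zero

lemma wtD_ne_zero {d : ℕ} (t s : Fin d → Or3) (b : DgFun d) (jt js : Fin d → Idx m n true)
    (h1 : ∀ k, matchB (js k) (s k) = true) (h2 : ∀ k, matchB (jt k) (t k) = true)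
    (h3 : ∀ x, absI (Sum.elim jt js (b x)) = absI (Sum.elim jt js x)) :
    wtD m n true d d t s b jt js ≠ 0 := by
  unfold wtD
  rw [if_pos ⟨h1, h2, h3⟩]
  exact mul_ne_zero (mul_ne_zero (crossSgn_ne_zero _ _) (capSgn_ne_zero _ _ _))
    (cupSgn_ne_zero _ _ _)

lemma wtD_cond {d : ℕ} {t s : Fin d → Or3} {b : DgFun d} {jt js : Fin d → Idx m n true}
    (h : wtD m n true d d t s b jt js ≠ 0) :
    (∀ k, matchB (js k) (s k) = true) ∧ (∀ k, matchB (jt k) (t k) = true) ∧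
    (∀ x, absI (Sum.elim jt js (b x)) = absI (Sum.elim jt js x)) := by
  by_contra hc
  exact h (by unfold wtD; rw [if_neg hc])

variable {d : ℕ}

lemma no_oI_arc {t' s' : Fin d → Or3} {c : DgFun d} (hor : OrientedGBD d d t' s' c)
    {jt js : Fin d → Idx m n true}
    (hmt : ∀ k, matchB (jt k) (t' k) = true) (hms : ∀ k, matchB (js k) (s' k) = true)
    (v : Fin d ⊕ Fin d) (hv : Sum.elim jt js v = oI) :
    c v = v := by
  obtain ⟨hinv, htt, hss, hts, htf, hsf⟩ := hor
  by_contra hne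
  rcases v with i | i
  · simp only [Sum.elim_inl] at hv
    have hcirc : t' i = Or3.circ := matchB_oI (hv ▸ hmt i)
    rcases hc : c (Sum.inl i) with j | j
    · have hij : i ≠ j := fun h => hne (by rw [hc, h])
      rcases htt i j hij hc with ⟨h1,_⟩|⟨h1,_⟩ <;> rw [h1] at hcirc <;>
        exact Or3.noConfusion hcirc
    · exact (hts i j hc).2 hcirc
  · simp only [Sum.elim_inr] at hv
    have hcirc : s' i = Or3.circ := matchB_oI (hv ▸ hms i)
    rcases hc : c (Sum.inr i) with j | j
    · have h2 : c (Sum.inl j) = Sum.inr i := by rw [← hc, hinv]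
      exact (hts j i h2).2 ((hts j i h2).1.trans hcirc)
    · have hij : i ≠ j := fun h => hne (by rw [hc, h])
      rcases hss i j hij hc with ⟨h1,_⟩|⟨h1,_⟩ <;> rw [h1] at hcirc <;>
        exact Or3.noConfusion hcirc

lemma nfix_of_ne_oI {t' s' : Fin d → Or3} {c : DgFun d} (hor : OrientedGBD d d t' s' c)
    {jt js : Fin d → Idx m n true}
    (hmt : ∀ k, matchB (jt k) (t' k) = true) (hms : ∀ k, matchB (js k) (s' k) = true)
    (v : Fin d ⊕ Fin d) (hv : Sum.elim jt js v ≠ oI) : c v ≠ v := by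
  obtain ⟨_, _, _, _, htf, hsf⟩ := hor
  intro h
  rcases v with i | i
  · exact hv (by simp only [Sum.elim_inl]; exact matchB_circ ((htf i h) ▸ hmt i))
  · exact hv (by simp only [Sum.elim_inr]; exact matchB_circ ((hsf i h) ▸ hms i))

lemma forced_eq {t' s' : Fin d → Or3} {c : DgFun d} (hor : OrientedGBD d d t' s' c)
    {jt js : Fin d → Idx m n true}
    (hmt : ∀ k, matchB (jt k) (t' k) = true) (hms : ∀ k, matchB (js k) (s' k) = true)
    (habs : ∀ x, absI (Sum.elim jt js (c x)) = absI (Sum.elim jt js x))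
    (cstar : DgFun d)
    (h0 : ∀ v, Sum.elim jt js v = oI ↔ cstar v = v)
    (h2 : ∀ v w, absI (Sum.elim jt js v) = absI (Sum.elim jt js w) →
        Sum.elim jt js v ≠ oI → w = v ∨ w = cstar v) :
    c = cstar := by
  funext v
  by_cases hv : Sum.elim jt js v = oI
  · rw [no_oI_arc hor hmt hms v hv, (h0 v).1 hv]
  · rcases h2 v (c v) (habs v).symm hv with h | h
    · exact absurd h (nfix_of_ne_oI hor hmt hms v hv)
    · exact h

def swapExt (d : ℕ) (c : DgFun d) (u v : Fin d ⊕ Fin d) : DgFun d :=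
  fun z => if z = u then v else if z = v then u else c z

lemma swapExt_apply_of_ne (c : DgFun d) (u v z : Fin d ⊕ Fin d) (hu : z ≠ u) (hv : z ≠ v) :
    swapExt d c u v z = c z := by simp [swapExt, hu, hv]

lemma swapExt_u (c : DgFun d) (u v : Fin d ⊕ Fin d) : swapExt d c u v u = v := by
  simp [swapExt]

lemma swapExt_v (c : DgFun d) (u v : Fin d ⊕ Fin d) (h : v ≠ u) : swapExt d c u v v = u := by
  simp [swapExt, h]

lemma fixCount_swapExt (c : DgFun d) (u v : Fin d ⊕ Fin d) (hu : c u = u) (hv : c v = v)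
    (huv : u ≠ v) : fixCount d (swapExt d c u v) + 2 = fixCount d c := by
  unfold fixCount
  have hset : Finset.univ.filter (fun x => swapExt d c u v x = x)
      = ((Finset.univ.filter (fun x : Fin d ⊕ Fin d => c x = x)).erase u).erase v := by
    ext x
    simp only [Finset.mem_filter, Finset.mem_erase, Finset.mem_univ, true_and]
    constructor
    · intro h
      have hxu : x ≠ u := by rintro rfl; rw [swapExt_u] at h; exact huv h.symm
      have hxv : x ≠ v := by
        rintro rfl; rw [swapExt_v c u x hxu] at h; exact huv h
      rw [swapExt_apply_of_ne c u v x hxu hxv] at h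
      exact ⟨hxv, hxu, h⟩
    · rintro ⟨hxv, hxu, h⟩
      rw [swapExt_apply_of_ne c u v x hxu hxv]; exact h
  have hu' : u ∈ Finset.univ.filter (fun x : Fin d ⊕ Fin d => c x = x) := by
    simp [Finset.mem_filter, hu]
  have hv' : v ∈ (Finset.univ.filter (fun x : Fin d ⊕ Fin d => c x = x)).erase u :=
    Finset.mem_erase.2 ⟨Ne.symm huv, Finset.mem_filter.2 ⟨Finset.mem_univ v, hv⟩⟩
  have h2le : 2 ≤ (Finset.univ.filter (fun x : Fin d ⊕ Fin d => c x = x)).card := by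
    refine Finset.one_lt_card.2 ⟨u, hu', v, ?_, huv⟩
    simp [Finset.mem_filter, hv]
  rw [hset, Finset.card_erase_of_mem hv', Finset.card_erase_of_mem hu']
  omega

lemma vCount_swapExt_le (c : DgFun d) (u v : Fin d ⊕ Fin d) (hu : c u = u) (hv : c v = v) :
    vCount d c ≤ vCount d (swapExt d c u v) := by
  unfold vCount
  apply Finset.card_le_card
  intro i hi
  simp only [Finset.mem_filter, Finset.mem_univ, true_and] at hi ⊢
  have h1 : Sum.inl i ≠ u := by rintro rfl; rw [hu] at hi; simp at hi
  have h2 : Sum.inl i ≠ v := by rintro rfl; rw [hv] at hi; simp at hi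
  rw [swapExt_apply_of_ne c u v _ h1 h2]; exact hi

lemma subDiagOf_swapExt (c : DgFun d) (u v : Fin d ⊕ Fin d) (hu : c u = u) (hv : c v = v) :
    subDiagOf c (swapExt d c u v) := by
  intro x
  by_cases hx : x = u
  · subst hx; exact Or.inl hu
  by_cases hx' : x = v
  · subst hx'; exact Or.inl hv
  · exact Or.inr (swapExt_apply_of_ne c u v x hx hx').symm

end Aux58
section Aux58c

lemma exists_labels (m n d : ℕ) (hd : d ≤ m + n) (t s : Fin d → Or3) (c₀ : DgFun d)
    (hor : OrientedGBD d d t s c₀) (hfix : 0 < fixCount d c₀) :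
    ∃ (L : Fin d ⊕ Fin d → Idx m n true) (a : Fin (m + n)),
      (∀ k, matchB (L (Sum.inl k)) (t k) = true) ∧
      (∀ k, matchB (L (Sum.inr k)) (s k) = true) ∧
      (∀ x, absI (L (c₀ x)) = absI (L x)) ∧
      (∀ x, L x = oI ↔ c₀ x = x) ∧
      (∀ x y, absI (L x) = absI (L y) → L x ≠ oI → y = x ∨ y = c₀ x) ∧
      (∀ x, absI (L x) ≠ (a : ℕ) + 1) := by
  classical
  obtain ⟨hinv, htt, hss, hts, htf, hsf⟩ := hor
  have hdpos : 0 < d := by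
    have : (Finset.univ.filter (fun x : Fin d ⊕ Fin d => c₀ x = x)).Nonempty :=
      Finset.card_pos.1 hfix
    obtain ⟨x, _⟩ := this
    rcases x with i | i <;> exact i.pos
  have hmn : 0 < m + n := lt_of_lt_of_le hdpos hd
  set e : (Fin d ⊕ Fin d) ≃ Fin (d + d) := finSumFinEquiv with he
  set Rset : Finset (Fin d ⊕ Fin d) :=
    Finset.univ.filter (fun x => c₀ x ≠ x ∧ e x < e (c₀ x)) with hRset
  have hcard : 2 * Rset.card + fixCount d c₀ ≤ 2 * d := by
    have hdisj : Disjoint Rset (Rset.image c₀) := by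
      rw [Finset.disjoint_left]
      rintro x hx hx'
      obtain ⟨y, hy, rfl⟩ := Finset.mem_image.1 hx'
      simp only [hRset, Finset.mem_filter, Finset.mem_univ, true_and] at hx hy
      rw [hinv y] at hx
      exact absurd hy.2 (not_lt.2 (le_of_lt hx.2))
    have hsub : Rset ∪ Rset.image c₀ ⊆
        Finset.univ.filter (fun x : Fin d ⊕ Fin d => ¬ c₀ x = x) := by
      intro x hx
      rcases Finset.mem_union.1 hx with hx | hx
      · simp only [hRset, Finset.mem_filter, Finset.mem_univ, true_and] at hx ⊢
        exact hx.1
      · obtain ⟨y, hy, rfl⟩ := Finset.mem_image.1 hx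
        simp only [hRset, Finset.mem_filter, Finset.mem_univ, true_and] at hy ⊢
        rw [hinv y]
        exact fun h => hy.1 h.symm
    have h1 := Finset.card_le_card hsub
    rw [Finset.card_union_of_disjoint hdisj,
      Finset.card_image_of_injective _ hinv.injective] at h1
    have h2 : fixCount d c₀
        + (Finset.univ.filter (fun x : Fin d ⊕ Fin d => ¬ c₀ x = x)).card
        = (Finset.univ : Finset (Fin d ⊕ Fin d)).card := by
      unfold fixCount
      exact Finset.card_filter_add_card_filter_not _
    have h3 : (Finset.univ : Finset (Fin d ⊕ Fin d)).card = d + d := by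
      simp [Finset.card_univ]
    omega
  set k := Rset.card with hk
  have hkd : k + 1 ≤ d := by omega
  set rep : (Fin d ⊕ Fin d) → (Fin d ⊕ Fin d) :=
    fun x => if e x < e (c₀ x) then x else c₀ x with hrep
  have hrep_mem : ∀ x, c₀ x ≠ x → rep x ∈ Rset := by
    intro x hx
    by_cases h : e x < e (c₀ x)
    · simp only [hrep, if_pos h, hRset, Finset.mem_filter, Finset.mem_univ, true_and]
      exact ⟨hx, h⟩
    · simp only [hrep, if_neg h, hRset, Finset.mem_filter, Finset.mem_univ, true_and]
      constructor
      · rw [hinv x]; exact fun hh => hx hh.symm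
      · rw [hinv x]
        rcases lt_or_eq_of_le (not_lt.1 h) with h' | h'
        · exact h'
        · exact absurd (e.injective h') hx
  have hrep_or : ∀ x, rep x = x ∨ rep x = c₀ x := by
    intro x; by_cases h : e x < e (c₀ x)
    · exact Or.inl (by simp [hrep, if_pos h])
    · exact Or.inr (by simp [hrep, if_neg h])
  have hrep_c : ∀ x, c₀ x ≠ x → rep (c₀ x) = rep x := by
    intro x hx
    simp only [hrep, hinv x]
    by_cases h : e x < e (c₀ x)
    · rw [if_pos h, if_neg (not_lt.2 (le_of_lt h))]
    · have hlt : e (c₀ x) < e x :=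
        lt_of_le_of_ne (not_lt.1 h) (fun hh => hx (e.injective hh))
      rw [if_pos hlt, if_neg h]
  set en := Rset.equivFin with hen
  set valn : (Fin d ⊕ Fin d) → ℕ :=
    fun x => if h : rep x ∈ Rset then (en ⟨rep x, h⟩ : ℕ) else 0 with hvaln
  have hvaln_lt : ∀ x, c₀ x ≠ x → valn x < k := by
    intro x hx
    simp only [hvaln, dif_pos (hrep_mem x hx)]
    exact (en ⟨rep x, hrep_mem x hx⟩).isLt
  have hvaln_c : ∀ x, c₀ x ≠ x → valn (c₀ x) = valn x := by
    intro x hx; simp only [hvaln, hrep_c x hx]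
  have hvaln_inj : ∀ x y, c₀ x ≠ x → c₀ y ≠ y → valn x = valn y → y = x ∨ y = c₀ x := by
    intro x y hx hy hxy
    have hrx := hrep_mem x hx; have hry := hrep_mem y hy
    simp only [hvaln, dif_pos hrx, dif_pos hry] at hxy
    have hrr : rep x = rep y := Subtype.ext_iff.1 (en.injective (Fin.ext hxy))
    rcases hrep_or x with h1 | h1 <;> rcases hrep_or y with h2 | h2
    · left; rw [← h2, ← hrr]; exact h1
    · right
      have hxcy : x = c₀ y := by rw [← h1, hrr, h2]
      rw [hxcy, hinv y]
    · right; rw [← h1, hrr]; exact h2.symm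
    · left; exact hinv.injective (by rw [← h2, ← hrr]; exact h1)
  set a : Fin (m + n) := ⟨m + n - 1, by omega⟩ with ha
  have haval : (a : ℕ) = m + n - 1 := rfl
  have hcirc : ∀ x : Fin d ⊕ Fin d, Sum.elim t s x = Or3.circ ↔ c₀ x = x := by
    intro x
    constructor
    · intro h
      by_contra hne
      rcases x with i | i
      · simp only [Sum.elim_inl] at h
        rcases hc : c₀ (Sum.inl i) with j | j
        · have hij : i ≠ j := fun hh => hne (by rw [hc, hh])
          rcases htt i j hij hc with ⟨h1,_⟩|⟨h1,_⟩ <;> rw [h] at h1 <;>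
            exact Or3.noConfusion h1
        · exact (hts i j hc).2 h
      · simp only [Sum.elim_inr] at h
        rcases hc : c₀ (Sum.inr i) with j | j
        · have h2 : c₀ (Sum.inl j) = Sum.inr i := by rw [← hc, hinv]
          exact (hts j i h2).2 ((hts j i h2).1.trans h)
        · have hij : i ≠ j := fun hh => hne (by rw [hc, hh])
          rcases hss i j hij hc with ⟨h1,_⟩|⟨h1,_⟩ <;> rw [h] at h1 <;>
            exact Or3.noConfusion h1
    · intro h
      rcases x with i | i
      · exact htf i h
      · exact hsf i h
  have hvaln_lt_all : ∀ x, valn x < m + n := by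
    intro x
    by_cases hx : c₀ x = x
    · simp only [hvaln]
      split
      · exact lt_of_lt_of_le (en _).isLt (by omega)
      · exact hmn
    · exact lt_of_lt_of_le (hvaln_lt x hx) (by omega)
  set valF : (Fin d ⊕ Fin d) → Fin (m + n) := fun x => ⟨valn x, hvaln_lt_all x⟩ with hvalF
  set L : Fin d ⊕ Fin d → Idx m n true := fun x =>
    match Sum.elim t s x with
    | Or3.circ => oI
    | Or3.up => ⟨some (Sum.inl (valF x)), fun _ => rfl⟩
    | Or3.down => ⟨some (Sum.inr (valF x)), fun _ => rfl⟩
    with hL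
  have habsL : ∀ x, Sum.elim t s x ≠ Or3.circ → absI (L x) = valn x + 1 := by
    intro x hx
    rcases h : Sum.elim t s x with _ | _ | _
    · simp only [hL, h]; rfl
    · simp only [hL, h]; rfl
    · exact absurd h hx
  have hLoI : ∀ x, Sum.elim t s x = Or3.circ → L x = oI := by
    intro x h; simp only [hL, h]
  have hLfix : ∀ x, L x = oI ↔ c₀ x = x := by
    intro x
    constructor
    · intro h
      rcases hE : Sum.elim t s x with _ | _ | _
      · exfalso; simp only [hL, hE] at h
        exact Option.some_ne_none _ (Subtype.ext_iff.1 h)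
      · exfalso; simp only [hL, hE] at h
        exact Option.some_ne_none _ (Subtype.ext_iff.1 h)
      · exact (hcirc x).1 hE
    · intro h
      exact hLoI x ((hcirc x).2 h)
  have habs2 : ∀ x, absI (L (c₀ x)) = absI (L x) := by
    intro x
    by_cases hx : c₀ x = x
    · rw [hx]
    · have h1 : Sum.elim t s x ≠ Or3.circ := fun h => hx ((hcirc x).1 h)
      have h2 : Sum.elim t s (c₀ x) ≠ Or3.circ := by
        intro h
        have := (hcirc (c₀ x)).1 h
        rw [hinv x] at this
        exact hx this.symm
      rw [habsL _ h2, habsL _ h1, hvaln_c x hx]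
  have hinjL : ∀ x y, absI (L x) = absI (L y) → L x ≠ oI → y = x ∨ y = c₀ x := by
    intro x y hxy hx
    have hxf : c₀ x ≠ x := fun h => hx ((hLfix x).2 h)
    have h1 : Sum.elim t s x ≠ Or3.circ := fun h => hxf ((hcirc x).1 h)
    have hy : L y ≠ oI := by
      intro h
      rw [h, absI_oI, habsL x h1] at hxy
      omega
    have hyf : c₀ y ≠ y := fun h => hy ((hLfix y).2 h)
    have h2 : Sum.elim t s y ≠ Or3.circ := fun h => hyf ((hcirc y).1 h)
    rw [habsL x h1, habsL y h2] at hxy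
    exact hvaln_inj x y hxf hyf (by omega)
  have hnota : ∀ x, absI (L x) ≠ (a : ℕ) + 1 := by
    intro x
    by_cases hx : c₀ x = x
    · rw [(hLfix x).2 hx, absI_oI, haval]; omega
    · have h1 : Sum.elim t s x ≠ Or3.circ := fun h => hx ((hcirc x).1 h)
      rw [habsL x h1, haval]
      have := hvaln_lt x hx
      omega
  have hmatch_t : ∀ kk, matchB (L (Sum.inl kk)) (t kk) = true := by
    intro kk
    rcases h : t kk with _ | _ | _ <;>
      · have hE : Sum.elim t s (Sum.inl kk) = t kk := rfl
        simp only [hL, hE, h]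
        rfl
  have hmatch_s : ∀ kk, matchB (L (Sum.inr kk)) (s kk) = true := by
    intro kk
    rcases h : s kk with _ | _ | _ <;>
      · have hE : Sum.elim t s (Sum.inr kk) = s kk := rfl
        simp only [hL, hE, h]
        rfl
  exact ⟨L, a, hmatch_t, hmatch_s, habs2, hLfix, hinjL, hnota⟩

end Aux58c
section Aux58d
variable {m n : ℕ}

def Xmat (m n : ℕ) (a : Fin (m + n)) : Matrix (Idx m n true) (Idx m n true) ℂ :=
  Matrix.of fun α β =>
    (if α = vaI m n a then if β = oI then 1 else 0 else 0) -
    (if α = oI then if β = vbI m n a then 1 else 0 else 0)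

lemma Xmat_va_oI (a : Fin (m+n)) : Xmat m n a (vaI m n a) oI = 1 := by
  simp [Xmat, vaI_ne_oI a]

lemma Xmat_oI_vb (a : Fin (m+n)) : Xmat m n a oI (vbI m n a) = -1 := by
  simp [Xmat, Ne.symm (vaI_ne_oI a)]

lemma Xmat_ne_zero_cases {a : Fin (m+n)} {α β : Idx m n true} (h : Xmat m n a α β ≠ 0) :
    (α = vaI m n a ∧ β = oI) ∨ (α = oI ∧ β = vbI m n a) := by
  by_contra hc
  push_neg at hc
  apply h
  simp only [Xmat, Matrix.of_apply]
  by_cases h1 : α = vaI m n a <;> by_cases h2 : β = oI <;> by_cases h3 : α = oI <;>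
    by_cases h4 : β = vbI m n a <;> simp_all [vaI_ne_oI a, vbI_ne_oI a, vaI_ne_vbI a, Ne.symm (vaI_ne_oI a), Ne.symm (vbI_ne_oI a), Ne.symm (vaI_ne_vbI a)]

lemma parI_oI : parI (oI : Idx m n true) = false := rfl
lemma parI_vaI (a : Fin (m+n)) : parI (vaI m n a) = decide (m ≤ (a:ℕ)) := rfl
lemma parI_vbI (a : Fin (m+n)) : parI (vbI m n a) = decide (m ≤ (a:ℕ)) := rfl

lemma formB_vaI_left (a : Fin (m+n)) (l : Idx m n true) :
    formB (vaI m n a) l = if l = vbI m n a then 1 else 0 := by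
  obtain ⟨v, hv⟩ := l
  rcases v with _ | (kk | kk)
  · simp [formB, vbI, vaI, oI, Subtype.ext_iff]
  · simp [formB, vbI, vaI, oI, Subtype.ext_iff]
  · by_cases h : kk = a
    · subst h; simp [formB, vbI, vaI, Subtype.ext_iff]
    · simp [formB, vbI, vaI, Subtype.ext_iff, h, Ne.symm h]
lemma formB_oI_left (l : Idx m n true) :
    formB (oI : Idx m n true) l = if l = oI then 1 else 0 := by
  obtain ⟨v, hv⟩ := l
  rcases v with _ | (kk | kk) <;> simp [formB, oI, Subtype.ext_iff]
lemma formB_vaI_right (a : Fin (m+n)) (j : Idx m n true) :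
    formB j (vaI m n a) = if j = vbI m n a then (if (a:ℕ) < m then 1 else (-1:ℂ)) else 0 := by
  obtain ⟨v, hv⟩ := j
  rcases v with _ | (kk | kk)
  · simp [formB, vbI, vaI, oI, Subtype.ext_iff]
  · simp [formB, vbI, vaI, oI, Subtype.ext_iff]
  · by_cases h : kk = a
    · subst h; simp [formB, vbI, vaI, Subtype.ext_iff]
    · simp [formB, vbI, vaI, Subtype.ext_iff, h]
lemma formB_oI_right (j : Idx m n true) :
    formB j (oI : Idx m n true) = if j = oI then 1 else 0 := by
  obtain ⟨v, hv⟩ := j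
  rcases v with _ | (kk | kk) <;> simp [formB, oI, Subtype.ext_iff]

lemma Xmat_osp (m n : ℕ) (a : Fin (m+n)) :
    IsOspHomogG parI (formBM m n true) (Xmat m n a) (parI (vaI m n a)) := by
  constructor
  · intro i j hij
    rcases Xmat_ne_zero_cases hij with ⟨rfl, rfl⟩ | ⟨rfl, rfl⟩
    · rw [parI_oI]; exact Bool.xor_false _
    · rw [parI_oI, parI_vbI, parI_vaI]; exact Bool.false_xor _
  · intro j l
    have e1 : (∑ α, Xmat m n a α j * formBM m n true α l)
        = (if j = oI then 1 else 0) * formB (vaI m n a) l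
          - (if j = vbI m n a then 1 else 0) * formB oI l := by
      simp only [Xmat, formBM, Matrix.of_apply, sub_mul, ite_mul, zero_mul,
        Finset.sum_sub_distrib, Finset.sum_ite_eq', Finset.mem_univ, if_true]
    have e2 : (∑ α, Xmat m n a α l * formBM m n true j α)
        = (if l = oI then 1 else 0) * formB j (vaI m n a)
          - (if l = vbI m n a then 1 else 0) * formB j oI := by
      simp only [Xmat, formBM, Matrix.of_apply, sub_mul, ite_mul, zero_mul,
        Finset.sum_sub_distrib, Finset.sum_ite_eq', Finset.mem_univ, if_true]
    rw [e1, e2, formB_vaI_left, formB_oI_left, formB_vaI_right, formB_oI_right]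
    by_cases hm : m ≤ (a:ℕ)
    · have hm' : ¬ ((a:ℕ) < m) := Nat.not_lt.2 hm
      by_cases hj0 : j = oI <;> by_cases hjb : j = vbI m n a <;>
        by_cases hl0 : l = oI <;> by_cases hlb : l = vbI m n a <;>
        simp_all [sgn, parI_oI, parI_vbI, parI_vaI, vbI_ne_oI a] <;>
        (try rw [if_neg (by omega)]) <;> norm_num
    · have hm' : (a:ℕ) < m := Nat.not_le.1 hm
      by_cases hj0 : j = oI <;> by_cases hjb : j = vbI m n a <;>
        by_cases hl0 : l = oI <;> by_cases hlb : l = vbI m n a <;>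
        simp_all [sgn, parI_oI, parI_vbI, parI_vaI, vbI_ne_oI a] <;>
        (try rw [if_neg (by omega)]) <;> norm_num

variable {d : ℕ}

lemma rho_supp {a : Fin (m+n)} {px : Bool} {o i : Fin d → Idx m n true}
    (h : rhoMatG d parI (Xmat m n a) px o i ≠ 0) :
    ∃ pos : Fin d, (∀ j, j ≠ pos → o j = i j) ∧
      ((o pos = vaI m n a ∧ i pos = oI) ∨ (o pos = oI ∧ i pos = vbI m n a)) := by
  unfold rhoMatG at h
  rw [Matrix.of_apply] at h
  obtain ⟨pos, _, hpos⟩ := Finset.exists_ne_zero_of_sum_ne_zero h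
  by_cases hc : ∀ j, j ≠ pos → o j = i j
  · rw [if_pos hc] at hpos
    exact ⟨pos, hc, Xmat_ne_zero_cases (right_ne_zero_of_mul hpos)⟩
  · rw [if_neg hc] at hpos
    exact absurd rfl hpos

lemma rho_update_ne_zero {a : Fin (m+n)} {px : Bool} (i : Fin d → Idx m n true)
    (pos : Fin d) (v : Idx m n true) (hne : v ≠ i pos)
    (hX : Xmat m n a v (i pos) ≠ 0) :
    rhoMatG d parI (Xmat m n a) px (Function.update i pos v) i ≠ 0 := by
  unfold rhoMatG
  rw [Matrix.of_apply, Finset.sum_eq_single pos]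
  · rw [if_pos (fun j hj => by rw [Function.update_of_ne hj]), Function.update_self]
    apply mul_ne_zero _ hX
    split
    · exact Finset.prod_ne_zero_iff.2 fun _ _ => sgn_ne_zero _
    · exact one_ne_zero
  · intro b _ hb
    rw [if_neg]
    intro hcond
    have := hcond pos (Ne.symm hb)
    rw [Function.update_self] at this
    exact hne this
  · intro habs; exact absurd (Finset.mem_univ pos) habs

end Aux58d
section Aux58e

lemma step_lemma (m n d : ℕ) (hd : d ≤ m + n) (f : EndSp d)
    (hsupp : ∀ (s t : Fin d → Or3) (c : DgFun d), f s t c ≠ 0 → OrientedGBD d d t s c)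
    (hcomm : ∀ (X : Matrix (Idx m n true) (Idx m n true) ℂ) (px : Bool),
        IsOspHomogG (parI (m := m) (n := n) (odd := true)) (formBM m n true) X px →
        Matrix.toLin' (ThetaMat m n true d f)
            ∘ₗ Matrix.toLin' (rhoMatG d (parI (m := m) (n := n) (odd := true)) X px)
          = Matrix.toLin' (rhoMatG d (parI (m := m) (n := n) (odd := true)) X px)
            ∘ₗ Matrix.toLin' (ThetaMat m n true d f))
    (s t : Fin d → Or3) (c₀ : DgFun d) (hne : f s t c₀ ≠ 0)
    (hfix : 0 < fixCount d c₀) :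
    ∃ (s' t' : Fin d → Or3) (c' : DgFun d),
      f s' t' c' ≠ 0 ∧ subDiagOf c₀ c' ∧ fixCount d c' + 2 = fixCount d c₀ ∧
      vCount d c₀ ≤ vCount d c' := by
  classical
  have hor := hsupp s t c₀ hne
  have hinv := hor.1
  obtain ⟨L, a, hmt, hms, habsL, hLfix, hinjL, hnota⟩ :=
    exists_labels m n d hd t s c₀ hor hfix
  obtain ⟨z₀, hz₀⟩ : ∃ z₀, c₀ z₀ = z₀ := by
    obtain ⟨x, hx⟩ := Finset.card_pos.1 hfix
    exact ⟨x, (Finset.mem_filter.1 hx).2⟩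
  set px := parI (vaI m n a) with hpx
  set R := rhoMatG d (parI (m := m) (n := n) (odd := true)) (Xmat m n a) px with hRdef
  set M := ThetaMat m n true d f with hMdef0
  have hMR : M * R = R * M := by
    have h := hcomm (Xmat m n a) px (Xmat_osp m n a)
    rw [← Matrix.toLin'_mul, ← Matrix.toLin'_mul] at h
    exact Matrix.toLin'.injective h
  set out0 : Fin d → Idx m n true := fun j => L (Sum.inl j) with hout0
  set inp0 : Fin d → Idx m n true := fun j => L (Sum.inr j) with hinp0
  set outS : Fin d → Idx m n true :=
    fun j => if Sum.inl j = z₀ then vaI m n a else L (Sum.inl j) with houtS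
  set inpS : Fin d → Idx m n true :=
    fun j => if Sum.inr j = z₀ then vbI m n a else L (Sum.inr j) with hinpS
  have hLz : L z₀ = oI := (hLfix z₀).2 hz₀
  have hLnotva : ∀ x, L x ≠ vaI m n a := fun x h => hnota x (by rw [h, absI_vaI])
  have hLnotvb : ∀ x, L x ≠ vbI m n a := fun x h => hnota x (by rw [h, absI_vbI])
  have helim0 : Sum.elim out0 inp0 = L := by funext x; rcases x with i | i <;> rfl
  -- forced classification wrappers
  have hforced_swap : ∀ (t' s' : Fin d → Or3) (c : DgFun d) (y : Fin d ⊕ Fin d)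
      (jt js : Fin d → Idx m n true),
      OrientedGBD d d t' s' c →
      (∀ k, matchB (jt k) (t' k) = true) → (∀ k, matchB (js k) (s' k) = true) →
      (∀ x, absI (Sum.elim jt js (c x)) = absI (Sum.elim jt js x)) →
      c₀ y = y → y ≠ z₀ →
      (∀ v, v ≠ z₀ → v ≠ y → Sum.elim jt js v = L v) →
      absI (Sum.elim jt js z₀) = (a:ℕ) + 1 → absI (Sum.elim jt js y) = (a:ℕ) + 1 →
      c = swapExt d c₀ z₀ y := by
    intro t' s' c y jt js hoc hjt hjs habs hy hyz hLoff habz haby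
    apply forced_eq hoc hjt hjs habs
    · intro v
      by_cases hvz : v = z₀
      · rw [hvz]
        constructor
        · intro h; rw [h, absI_oI] at habz; omega
        · intro h; rw [swapExt_u] at h; exact absurd h hyz
      by_cases hvy : v = y
      · rw [hvy]
        constructor
        · intro h; rw [h, absI_oI] at haby; omega
        · intro h; rw [swapExt_v c₀ z₀ y hyz] at h; exact absurd h.symm hyz
      · rw [hLoff v hvz hvy, swapExt_apply_of_ne c₀ z₀ y v hvz hvy]
        exact hLfix v
    · intro v w hvw hvnot
      by_cases hva : absI (Sum.elim jt js v) = (a:ℕ) + 1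
      · have hw : absI (Sum.elim jt js w) = (a:ℕ) + 1 := by rw [← hvw]; exact hva
        have hmem : ∀ u, absI (Sum.elim jt js u) = (a:ℕ) + 1 → u = z₀ ∨ u = y := by
          intro u hu
          by_contra hcu
          push_neg at hcu
          rw [hLoff u hcu.1 hcu.2] at hu
          exact hnota u hu
        rcases hmem v hva with hv1 | hv1 <;> rcases hmem w hw with hw1 | hw1
        · rw [hw1, hv1]; exact Or.inl rfl
        · rw [hw1, hv1]; exact Or.inr (swapExt_u c₀ z₀ y).symm
        · rw [hw1, hv1]; exact Or.inr (swapExt_v c₀ z₀ y hyz).symm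
        · rw [hw1, hv1]; exact Or.inl rfl
      · have hvz : v ≠ z₀ := fun h => hva (by rw [h]; exact habz)
        have hvy : v ≠ y := fun h => hva (by rw [h]; exact haby)
        have hwz : w ≠ z₀ := fun h => hva (by rw [hvw, h]; exact habz)
        have hwy : w ≠ y := fun h => hva (by rw [hvw, h]; exact haby)
        rw [hLoff v hvz hvy] at hvw hvnot
        rw [hLoff w hwz hwy] at hvw
        rcases hinjL v w hvw hvnot with h | h
        · exact Or.inl h
        · exact Or.inr (by rw [h, swapExt_apply_of_ne c₀ z₀ y v hvz hvy])
  have hforced_can : ∀ (t' s' : Fin d → Or3) (c : DgFun d),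
      OrientedGBD d d t' s' c →
      (∀ k, matchB (out0 k) (t' k) = true) → (∀ k, matchB (inp0 k) (s' k) = true) →
      (∀ x, absI (Sum.elim out0 inp0 (c x)) = absI (Sum.elim out0 inp0 x)) →
      c = c₀ ∧ t' = t ∧ s' = s := by
    intro t' s' c hoc hjt hjs habs
    refine ⟨?_, ?_, ?_⟩
    · apply forced_eq hoc hjt hjs habs c₀
      · intro v; rw [helim0]; exact hLfix v
      · intro v w hvw hv
        rw [helim0] at hvw hv
        exact hinjL v w hvw hv
    · funext k
      exact matchB_unique (hjt k) (show matchB (out0 k) (t k) = true from by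
        rw [hout0]; exact hmt k)
    · funext k
      exact matchB_unique (hjs k) (show matchB (inp0 k) (s k) = true from by
        rw [hinp0]; exact hms k)
  -- label shape lemmas
  have hinpS_oI : ∀ pos, inpS pos = oI →
      Sum.inr pos ≠ z₀ ∧ c₀ (Sum.inr pos) = Sum.inr pos := by
    intro pos h
    by_cases hz : Sum.inr pos = z₀
    · rw [hinpS] at h; simp only [if_pos hz] at h; exact absurd h (vbI_ne_oI a)
    · rw [hinpS] at h; simp only [if_neg hz] at h; exact ⟨hz, (hLfix _).1 h⟩
  have hinpS_vb : ∀ pos, inpS pos = vbI m n a → Sum.inr pos = z₀ := by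
    intro pos h
    by_cases hz : Sum.inr pos = z₀
    · exact hz
    · rw [hinpS] at h; simp only [if_neg hz] at h; exact absurd h (hLnotvb _)
  have houtS_oI : ∀ pos, outS pos = oI →
      Sum.inl pos ≠ z₀ ∧ c₀ (Sum.inl pos) = Sum.inl pos := by
    intro pos h
    by_cases hz : Sum.inl pos = z₀
    · rw [houtS] at h; simp only [if_pos hz] at h; exact absurd h (vaI_ne_oI a)
    · rw [houtS] at h; simp only [if_neg hz] at h; exact ⟨hz, (hLfix _).1 h⟩
  have houtS_va : ∀ pos, outS pos = vaI m n a → Sum.inl pos = z₀ := by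
    intro pos h
    by_cases hz : Sum.inl pos = z₀
    · exact hz
    · rw [houtS] at h; simp only [if_neg hz] at h; exact absurd h (hLnotva _)
  -- P and Q
  set P : (Fin d → Or3) → (Fin d → Or3) → DgFun d → ℂ := fun s' t' c =>
    ∑ mid : Fin d → Idx m n true, wtD m n true d d t' s' c outS mid * R mid inpS
    with hPdef
  set Q : (Fin d → Or3) → (Fin d → Or3) → DgFun d → ℂ := fun s' t' c =>
    ∑ mid : Fin d → Idx m n true, R outS mid * wtD m n true d d t' s' c mid inpS
    with hQdef
  have hkey : (∑ s' : Fin d → Or3, ∑ t' : Fin d → Or3, ∑ c : DgFun d,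
      f s' t' c * (P s' t' c - Q s' t' c)) = 0 := by
    have h1 : (M * R) outS inpS = (R * M) outS inpS := by rw [hMR]
    rw [Matrix.mul_apply, Matrix.mul_apply] at h1
    have hMap : ∀ o i, M o i = ∑ s' : Fin d → Or3, ∑ t' : Fin d → Or3, ∑ c : DgFun d,
        f s' t' c * wtD m n true d d t' s' c o i := fun o i => rfl
    have h2 : (∑ mid : Fin d → Idx m n true, M outS mid * R mid inpS)
        = ∑ s' : Fin d → Or3, ∑ t' : Fin d → Or3, ∑ c : DgFun d,
          f s' t' c * P s' t' c := by
      simp only [hMap, Finset.sum_mul]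
      rw [Finset.sum_comm]
      refine Finset.sum_congr rfl fun s' _ => ?_
      rw [Finset.sum_comm]
      refine Finset.sum_congr rfl fun t' _ => ?_
      rw [Finset.sum_comm]
      refine Finset.sum_congr rfl fun c _ => ?_
      rw [hPdef, Finset.mul_sum]
      exact Finset.sum_congr rfl fun mid _ => mul_assoc _ _ _
    have h3 : (∑ mid : Fin d → Idx m n true, R outS mid * M mid inpS)
        = ∑ s' : Fin d → Or3, ∑ t' : Fin d → Or3, ∑ c : DgFun d,
          f s' t' c * Q s' t' c := by
      simp only [hMap, Finset.mul_sum]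
      rw [Finset.sum_comm]
      refine Finset.sum_congr rfl fun s' _ => ?_
      rw [Finset.sum_comm]
      refine Finset.sum_congr rfl fun t' _ => ?_
      rw [Finset.sum_comm]
      refine Finset.sum_congr rfl fun c _ => ?_
      rw [hQdef, Finset.mul_sum]
      exact Finset.sum_congr rfl fun mid _ => mul_left_comm _ _ _
    have h4 : (∑ s' : Fin d → Or3, ∑ t' : Fin d → Or3, ∑ c : DgFun d,
        f s' t' c * (P s' t' c - Q s' t' c))
        = (∑ s' : Fin d → Or3, ∑ t' : Fin d → Or3, ∑ c : DgFun d,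
            f s' t' c * P s' t' c)
          - (∑ s' : Fin d → Or3, ∑ t' : Fin d → Or3, ∑ c : DgFun d,
            f s' t' c * Q s' t' c) := by
      simp only [mul_sub, Finset.sum_sub_distrib]
    rw [h4, ← h2, ← h3, h1, sub_self]
  -- classification of nonzero P-terms
  have hclassP : ∀ (t' s' : Fin d → Or3) (c : DgFun d), OrientedGBD d d t' s' c →
      ∀ mid, wtD m n true d d t' s' c outS mid * R mid inpS ≠ 0 →
      (∃ y, c₀ y = y ∧ y ≠ z₀ ∧ c = swapExt d c₀ z₀ y) ∨
      (c = c₀ ∧ t' = t ∧ s' = s ∧ mid = inp0 ∧ ∃ j, z₀ = Sum.inr j) := by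
    intro t' s' c hoc mid hterm
    have hwt := wtD_cond (left_ne_zero_of_mul hterm)
    obtain ⟨pos, hoff, hcase⟩ := rho_supp (right_ne_zero_of_mul hterm)
    rcases hcase with ⟨hma, hio⟩ | ⟨hmo, hib⟩
    · obtain ⟨hposz, hposfix⟩ := hinpS_oI pos hio
      left
      refine ⟨Sum.inr pos, hposfix, hposz, ?_⟩
      apply hforced_swap t' s' c (Sum.inr pos) outS mid hoc hwt.2.1 hwt.1 hwt.2.2
        hposfix hposz
      · intro v hvz hvy
        rcases v with i | i
        · simp only [Sum.elim_inl]; rw [houtS]; simp only [if_neg hvz]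
        · simp only [Sum.elim_inr]
          have hipos : i ≠ pos := fun h => hvy (by rw [h])
          rw [hoff i hipos, hinpS]; simp only [if_neg hvz]
      · rcases hz' : z₀ with i | i
        · simp only [Sum.elim_inl]
          rw [houtS]; simp only [if_pos (hz'.symm)]; exact absI_vaI a
        · simp only [Sum.elim_inr]
          have hipos : i ≠ pos := by
            intro h; apply hposz; rw [h] at hz'; exact hz'.symm
          rw [hoff i hipos, hinpS]; simp only [if_pos (hz'.symm)]; exact absI_vbI a
      · simp only [Sum.elim_inr]; rw [hma]; exact absI_vaI a
    · have hzpos := hinpS_vb pos hib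
      have hmid : mid = inp0 := by
        funext j
        by_cases hj : j = pos
        · subst hj
          rw [hmo, hinp0]
          show oI = L (Sum.inr j)
          rw [hzpos, hLz]
        · rw [hoff j hj, hinpS, hinp0]
          simp only [if_neg (show Sum.inr j ≠ z₀ from by
            rw [← hzpos]; exact fun h => hj (Sum.inr.inj h))]
      have houtS0 : outS = out0 := by
        funext j
        rw [houtS, hout0]
        simp only [if_neg (show Sum.inl j ≠ z₀ from by
          rw [← hzpos]; exact fun h => Sum.inl_ne_inr h)]
      obtain ⟨hc, ht', hs'⟩ := hforced_can t' s' c hoc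
        (by rw [← houtS0]; exact hwt.2.1) (by rw [← hmid]; exact hwt.1)
        (by rw [← houtS0, ← hmid]; exact hwt.2.2)
      exact Or.inr ⟨hc, ht', hs', hmid, pos, hzpos.symm⟩
  -- classification of nonzero Q-terms
  have hclassQ : ∀ (t' s' : Fin d → Or3) (c : DgFun d), OrientedGBD d d t' s' c →
      ∀ mid, R outS mid * wtD m n true d d t' s' c mid inpS ≠ 0 →
      (∃ y, c₀ y = y ∧ y ≠ z₀ ∧ c = swapExt d c₀ z₀ y) ∨
      (c = c₀ ∧ t' = t ∧ s' = s ∧ mid = out0 ∧ ∃ j, z₀ = Sum.inl j) := by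
    intro t' s' c hoc mid hterm
    have hwt := wtD_cond (right_ne_zero_of_mul hterm)
    obtain ⟨pos, hoff, hcase⟩ := rho_supp (left_ne_zero_of_mul hterm)
    rcases hcase with ⟨hova, hmo⟩ | ⟨hoo, hmb⟩
    · have hzpos := houtS_va pos hova
      have hmid : mid = out0 := by
        funext j
        by_cases hj : j = pos
        · subst hj
          rw [hmo, hout0]
          show oI = L (Sum.inl j)
          rw [hzpos, hLz]
        · rw [← hoff j hj, houtS, hout0]
          simp only [if_neg (show Sum.inl j ≠ z₀ from by
            rw [← hzpos]; exact fun h => hj (Sum.inl.inj h))]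
      have hinpS0 : inpS = inp0 := by
        funext j
        rw [hinpS, hinp0]
        simp only [if_neg (show Sum.inr j ≠ z₀ from by
          rw [← hzpos]; exact fun h => Sum.inr_ne_inl h)]
      obtain ⟨hc, ht', hs'⟩ := hforced_can t' s' c hoc
        (by rw [← hmid]; exact hwt.2.1) (by rw [← hinpS0]; exact hwt.1)
        (by rw [← hmid, ← hinpS0]; exact hwt.2.2)
      exact Or.inr ⟨hc, ht', hs', hmid, pos, hzpos.symm⟩
    · obtain ⟨hposz, hposfix⟩ := houtS_oI pos hoo
      left
      refine ⟨Sum.inl pos, hposfix, hposz, ?_⟩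
      apply hforced_swap t' s' c (Sum.inl pos) mid inpS hoc hwt.2.1 hwt.1 hwt.2.2
        hposfix hposz
      · intro v hvz hvy
        rcases v with i | i
        · simp only [Sum.elim_inl]
          have hipos : i ≠ pos := fun h => hvy (by rw [h])
          rw [← hoff i hipos, houtS]; simp only [if_neg hvz]
        · simp only [Sum.elim_inr]; rw [hinpS]; simp only [if_neg hvz]
      · rcases hz' : z₀ with i | i
        · simp only [Sum.elim_inl]
          have hipos : i ≠ pos := by
            intro h; apply hposz; rw [h] at hz'; exact hz'.symm
          rw [← hoff i hipos, houtS]; simp only [if_pos (hz'.symm)]; exact absI_vaI a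
        · simp only [Sum.elim_inr]
          rw [hinpS]; simp only [if_pos (hz'.symm)]; exact absI_vbI a
      · simp only [Sum.elim_inl]; rw [hmb]; exact absI_vbI a
  -- the canonical weight is nonzero
  have hwt_can : wtD m n true d d t s c₀ out0 inp0 ≠ 0 := by
    apply wtD_ne_zero
    · intro k; rw [hinp0]; exact hms k
    · intro k; rw [hout0]; exact hmt k
    · intro x; rw [helim0]; exact habsL x
  -- (P - Q) at the canonical triple is nonzero
  have hPQ0 : P s t c₀ - Q s t c₀ ≠ 0 := by
    rcases hz' : z₀ with j₀ | j₀
    · -- z₀ is a top vertex : P = 0, Q ≠ 0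
      have hPzero : P s t c₀ = 0 := by
        simp only [hPdef]
        apply Finset.sum_eq_zero
        intro mid _
        by_contra hterm
        rcases hclassP t s c₀ hor mid hterm with ⟨y, hy, hyz, hcc⟩ | ⟨_, _, _, _, j, hj⟩
        · have h := congrFun hcc z₀
          rw [hz₀, swapExt_u] at h
          exact hyz h.symm
        · rw [hz'] at hj; exact Sum.inl_ne_inr hj
      have hinpS0 : inpS = inp0 := by
        funext j
        rw [hinpS, hinp0]
        simp only [if_neg (show Sum.inr j ≠ z₀ from by
          rw [hz']; exact fun h => Sum.inr_ne_inl h)]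
      have hQval : Q s t c₀ = R outS out0 * wtD m n true d d t s c₀ out0 inpS := by
        simp only [hQdef]
        refine Finset.sum_eq_single out0 (fun mid _ hmid => ?_)
          (fun h => absurd (Finset.mem_univ _) h)
        by_contra hterm
        rcases hclassQ t s c₀ hor mid hterm with ⟨y, hy, hyz, hcc⟩ | ⟨_, _, _, hmide, _⟩
        · have h := congrFun hcc z₀
          rw [hz₀, swapExt_u] at h
          exact hyz h.symm
        · exact hmid hmide
      have hout0z : out0 j₀ = oI := by
        rw [hout0]
        show L (Sum.inl j₀) = oI
        rw [← hz', hLz]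
      have houtSu : outS = Function.update out0 j₀ (vaI m n a) := by
        funext j
        by_cases hj : j = j₀
        · subst hj
          rw [Function.update_self, houtS]
          simp only [if_pos hz'.symm]
        · rw [Function.update_of_ne hj, houtS, hout0]
          simp only [if_neg (show Sum.inl j ≠ z₀ from by
            rw [hz']; exact fun h => hj (Sum.inl.inj h))]
      have hRne : R outS out0 ≠ 0 := by
        rw [houtSu, hRdef]
        apply rho_update_ne_zero
        · rw [hout0z]; exact vaI_ne_oI a
        · rw [hout0z, Xmat_va_oI]; exact one_ne_zero
      have hQne : Q s t c₀ ≠ 0 := by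
        rw [hQval]
        apply mul_ne_zero hRne
        rw [hinpS0]
        exact hwt_can
      rw [hPzero, zero_sub]
      exact neg_ne_zero.2 hQne
    · -- z₀ is a bottom vertex : Q = 0, P ≠ 0
      have hQzero : Q s t c₀ = 0 := by
        simp only [hQdef]
        apply Finset.sum_eq_zero
        intro mid _
        by_contra hterm
        rcases hclassQ t s c₀ hor mid hterm with ⟨y, hy, hyz, hcc⟩ | ⟨_, _, _, _, j, hj⟩
        · have h := congrFun hcc z₀
          rw [hz₀, swapExt_u] at h
          exact hyz h.symm
        · rw [hz'] at hj; exact Sum.inr_ne_inl hj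
      have houtS0 : outS = out0 := by
        funext j
        rw [houtS, hout0]
        simp only [if_neg (show Sum.inl j ≠ z₀ from by
          rw [hz']; exact fun h => Sum.inl_ne_inr h)]
      have hPval : P s t c₀ = wtD m n true d d t s c₀ outS inp0 * R inp0 inpS := by
        simp only [hPdef]
        refine Finset.sum_eq_single inp0 (fun mid _ hmid => ?_)
          (fun h => absurd (Finset.mem_univ _) h)
        by_contra hterm
        rcases hclassP t s c₀ hor mid hterm with ⟨y, hy, hyz, hcc⟩ | ⟨_, _, _, hmide, _⟩
        · have h := congrFun hcc z₀
          rw [hz₀, swapExt_u] at h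
          exact hyz h.symm
        · exact hmid hmide
      have hinp0z : inp0 j₀ = oI := by
        rw [hinp0]
        show L (Sum.inr j₀) = oI
        rw [← hz', hLz]
      have hinpSz : inpS j₀ = vbI m n a := by
        rw [hinpS]
        simp only [if_pos hz'.symm]
      have hinp0u : inp0 = Function.update inpS j₀ oI := by
        funext j
        by_cases hj : j = j₀
        · subst hj
          rw [Function.update_self]; exact hinp0z
        · rw [Function.update_of_ne hj, hinpS, hinp0]
          simp only [if_neg (show Sum.inr j ≠ z₀ from by
            rw [hz']; exact fun h => hj (Sum.inr.inj h))]
      have hRne : R inp0 inpS ≠ 0 := by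
        rw [hinp0u, hRdef]
        apply rho_update_ne_zero
        · rw [hinpSz]; exact Ne.symm (vbI_ne_oI a)
        · rw [hinpSz, Xmat_oI_vb]; norm_num
      have hPne : P s t c₀ ≠ 0 := by
        rw [hPval]
        apply mul_ne_zero _ hRne
        rw [houtS0]
        exact hwt_can
      rw [hQzero, sub_zero]
      exact hPne
  -- conclude
  have hEx : ∃ (s' t' : Fin d → Or3) (y : Fin d ⊕ Fin d),
      c₀ y = y ∧ y ≠ z₀ ∧ f s' t' (swapExt d c₀ z₀ y) ≠ 0 := by
    by_contra hno
    push_neg at hno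
    have hzero : ∀ (s' t' : Fin d → Or3) (c : DgFun d),
        ¬ (s' = s ∧ t' = t ∧ c = c₀) → f s' t' c * (P s' t' c - Q s' t' c) = 0 := by
      intro s' t' c hns
      by_cases hf : f s' t' c = 0
      · rw [hf, zero_mul]
      by_cases hpq : P s' t' c - Q s' t' c = 0
      · rw [hpq, mul_zero]
      exfalso
      have hoc := hsupp s' t' c hf
      have hPorQ : P s' t' c ≠ 0 ∨ Q s' t' c ≠ 0 := by
        by_contra hb
        push_neg at hb
        rw [hb.1, hb.2, sub_self] at hpq
        exact hpq rfl
      rcases hPorQ with hp | hq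
      · simp only [hPdef] at hp
        obtain ⟨mid, _, hterm⟩ := Finset.exists_ne_zero_of_sum_ne_zero hp
        rcases hclassP t' s' c hoc mid hterm with ⟨y, hy, hyz, rfl⟩ | ⟨hc, ht', hs', _, _⟩
        · exact hf (hno s' t' y hy hyz)
        · exact hns ⟨hs', ht', hc⟩
      · simp only [hQdef] at hq
        obtain ⟨mid, _, hterm⟩ := Finset.exists_ne_zero_of_sum_ne_zero hq
        rcases hclassQ t' s' c hoc mid hterm with ⟨y, hy, hyz, rfl⟩ | ⟨hc, ht', hs', _, _⟩
        · exact hf (hno s' t' y hy hyz)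
        · exact hns ⟨hs', ht', hc⟩
    have e3 : ∀ s', s' ≠ s →
        (∑ t' : Fin d → Or3, ∑ c : DgFun d, f s' t' c * (P s' t' c - Q s' t' c)) = 0 := by
      intro s' hs'
      apply Finset.sum_eq_zero; intro t' _
      apply Finset.sum_eq_zero; intro c' _
      exact hzero s' t' c' (fun h => hs' h.1)
    have e2 : ∀ t', t' ≠ t →
        (∑ c : DgFun d, f s t' c * (P s t' c - Q s t' c)) = 0 := by
      intro t' ht'
      apply Finset.sum_eq_zero; intro c' _
      exact hzero s t' c' (fun h => ht' h.2.1)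
    have e1 : ∀ c', c' ≠ c₀ → f s t c' * (P s t c' - Q s t c') = 0 := by
      intro c' hc'
      exact hzero s t c' (fun h => hc' h.2.2)
    have hsingle : (∑ s' : Fin d → Or3, ∑ t' : Fin d → Or3, ∑ c : DgFun d,
        f s' t' c * (P s' t' c - Q s' t' c)) = f s t c₀ * (P s t c₀ - Q s t c₀) := by
      rw [Finset.sum_eq_single s (fun s' _ h => e3 s' h)
          (fun h => absurd (Finset.mem_univ _) h),
        Finset.sum_eq_single t (fun t' _ h => e2 t' h)
          (fun h => absurd (Finset.mem_univ _) h),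
        Finset.sum_eq_single c₀ (fun c' _ h => e1 c' h)
          (fun h => absurd (Finset.mem_univ _) h)]
    rw [hsingle] at hkey
    exact (mul_ne_zero hne hPQ0) hkey
  obtain ⟨s', t', y, hy, hyz, hf⟩ := hEx
  exact ⟨s', t', swapExt d c₀ z₀ y, hf, subDiagOf_swapExt c₀ z₀ y hz₀ hy,
    fixCount_swapExt c₀ z₀ y hz₀ hy (Ne.symm hyz), vCount_swapExt_le c₀ z₀ y hz₀ hy⟩

end Aux58e
/-- **Corollary 5.8.**  Odd case, `d ≤ m+n`.  Let `f = ∑ γ_{s,b,t} 1_s b 1_t`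
be an element of `End_{Mat(OB_d(m-n))}(⊕_s s)` with `Θ(f)` commuting with the
action of `osp(V)`.  If `γ_{s_r,b_r,t_r} ≠ 0` with `b_r` having `k` vertical
strands and `2r > 0` singletons, then there is a chain of oriented generalized
Brauer diagrams `(s_i, b_i, t_i)`, `0 ≤ i ≤ r`, with nonzero coefficients,
`b_i` having `2i` singletons and at least `k` vertical strands, and
`b_r ◁ b_{r-1} ◁ ⋯ ◁ b_0`; in particular `b_0` has no singleton blocks. -/
theorem exists_chain_to_brauer_diagram
    (m n d : ℕ) (hd : d ≤ m + n) (f : EndSp d)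
    (hsupp : ∀ (s t : Fin d → Or3) (c : DgFun d), f s t c ≠ 0 → OrientedGBD d d t s c)
    (hcomm : ∀ (X : Matrix (Idx m n true) (Idx m n true) ℂ) (px : Bool),
        IsOspHomogG (parI (m := m) (n := n) (odd := true)) (formBM m n true) X px →
        Matrix.toLin' (ThetaMat m n true d f)
            ∘ₗ Matrix.toLin' (rhoMatG d (parI (m := m) (n := n) (odd := true)) X px)
          = Matrix.toLin' (rhoMatG d (parI (m := m) (n := n) (odd := true)) X px)
            ∘ₗ Matrix.toLin' (ThetaMat m n true d f))
    (s t : Fin d → Or3) (c : DgFun d) (hne : f s t c ≠ 0)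
    (k r : ℕ) (hk : vCount d c = k) (hr : fixCount d c = 2 * r) (hrpos : 0 < r) :
    ∃ (S T : ℕ → (Fin d → Or3)) (B : ℕ → DgFun d),
      S r = s ∧ T r = t ∧ B r = c ∧
      (∀ i ≤ r, f (S i) (T i) (B i) ≠ 0 ∧ fixCount d (B i) = 2 * i ∧
        k ≤ vCount d (B i)) ∧
      (∀ i < r, subDiagOf (B (i + 1)) (B i)) := by
  suffices H : ∀ (r : ℕ) (s t : Fin d → Or3) (c : DgFun d), f s t c ≠ 0 →
      fixCount d c = 2 * r →
      ∃ (S T : ℕ → (Fin d → Or3)) (B : ℕ → DgFun d),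
        S r = s ∧ T r = t ∧ B r = c ∧
        (∀ i ≤ r, f (S i) (T i) (B i) ≠ 0 ∧ fixCount d (B i) = 2 * i ∧
          vCount d c ≤ vCount d (B i)) ∧
        (∀ i < r, subDiagOf (B (i + 1)) (B i)) by
    obtain ⟨S, T, B, h1, h2, h3, h4, h5⟩ := H r s t c hne hr
    exact ⟨S, T, B, h1, h2, h3,
      fun i hi => ⟨(h4 i hi).1, (h4 i hi).2.1, hk ▸ (h4 i hi).2.2⟩, h5⟩
  intro r
  induction r with
  | zero =>
    intro s t c h0 hfc
    refine ⟨fun _ => s, fun _ => t, fun _ => c, rfl, rfl, rfl, ?_, ?_⟩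
    · intro i hi
      have hi0 : i = 0 := Nat.le_zero.1 hi
      subst hi0
      exact ⟨h0, hfc, le_rfl⟩
    · intro i hi; exact absurd hi (Nat.not_lt_zero i)
  | succ q ih =>
    intro s t c h0 hfc
    obtain ⟨s', t', c', hf', hsub', hfix', hv'⟩ :=
      step_lemma m n d hd f hsupp hcomm s t c h0 (by omega)
    have hfc' : fixCount d c' = 2 * q := by omega
    obtain ⟨S, T, B, hS, hT, hB, h4, h5⟩ := ih s' t' c' hf' hfc'
    refine ⟨fun i => if i ≤ q then S i else s, fun i => if i ≤ q then T i else t,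
      fun i => if i ≤ q then B i else c, ?_, ?_, ?_, ?_, ?_⟩
    · simp [Nat.not_succ_le_self q]
    · simp [Nat.not_succ_le_self q]
    · simp [Nat.not_succ_le_self q]
    · intro i hi
      by_cases hiq : i ≤ q
      · simp only [if_pos hiq]
        obtain ⟨a1, a2, a3⟩ := h4 i hiq
        exact ⟨a1, a2, le_trans hv' a3⟩
      · have hieq : i = q + 1 := by omega
        subst hieq
        simp only [if_neg hiq]
        exact ⟨h0, hfc, le_rfl⟩
    · intro i hi
      by_cases hiq : i + 1 ≤ q
      · simp only [if_pos hiq, if_pos (by omega : i ≤ q)]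
        exact h5 i (by omega)
      · have hieq : i = q := by omega
        simp only [hieq, if_neg (show ¬ q + 1 ≤ q by omega), if_pos (le_refl q), hB]
        exact hsub'

end
end SWOSP
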